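/- For every natural number x with x ≥ 2, B( Σ_{j=2}^{⌊x/2⌋} B(x mod j, 1/2), 1/2 ) = 1 if x is prime and = 0 otherwise, where x mod j denotes the remainder of dividing x by j (taken as a real number); that is, this expression is the characteristic function of the set of prime numbers (a number x ≥ 2 being prime exactly when it has no divisor j with 2 ≤ j ≤ ⌊x/2⌋). -/

import Mathlib

noncomputable def B (x y : ℝ) : ℝ := (Real.sign (x + y) - Real.sign (x - y)) / 2

lemma B_nat (n : ℕ) : B (n : ℝ) (1 / 2) = if n = 0 then 1 else 0 := by
  unfold B
  rcases Nat.eq_zero_or_pos n with h | h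
  · subst h
    rw [if_pos rfl, Nat.cast_zero]
    rw [Real.sign_of_pos (by norm_num), Real.sign_of_neg (by norm_num)]
    norm_num
  · rw [if_neg (by omega)]
    have h1 : (1:ℝ) ≤ (n:ℝ) := by exact_mod_cast h
    rw [Real.sign_of_pos (by linarith), Real.sign_of_pos (by linarith)]
    norm_num

theorem stmt_19 (x : ℕ) (hx : 2 ≤ x) :
    B (∑ j ∈ Finset.Icc 2 (x / 2), B ((x % j : ℕ) : ℝ) (1 / 2)) (1 / 2) =
      if Nat.Prime x then 1 else 0 := by
  have hsum : (∑ j ∈ Finset.Icc 2 (x / 2), B ((x % j : ℕ) : ℝ) (1 / 2)) =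
      (((Finset.Icc 2 (x / 2)).filter (fun j => x % j = 0)).card : ℝ) := by
    rw [Finset.card_filter]
    push_cast
    refine Finset.sum_congr rfl fun j _ => ?_
    rw [B_nat]
  rw [hsum, B_nat]
  have key : ((Finset.Icc 2 (x / 2)).filter (fun j => x % j = 0)).card = 0 ↔ Nat.Prime x := by
    rw [Finset.card_eq_zero, Finset.filter_eq_empty_iff]
    constructor
    · intro h
      by_contra hp
      obtain ⟨m, hm, h2, hlt⟩ := Nat.exists_dvd_of_not_prime2 hx hp
      have h2m : 2 * m ≤ x := by
        obtain ⟨k, hk⟩ := hm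
        have : 2 ≤ k := by
          rcases Nat.lt_or_ge k 2 with hk2 | hk2
          · interval_cases k <;> omega
          · exact hk2
        nlinarith
      exact h (Finset.mem_Icc.mpr ⟨h2, Nat.le_div_iff_mul_le (by norm_num) |>.mpr
        (by omega)⟩) (Nat.mod_eq_zero_of_dvd hm)
    · intro hp j hj hmod
      rw [Finset.mem_Icc] at hj
      have hdvd : j ∣ x := Nat.dvd_of_mod_eq_zero hmod
      have := (Nat.Prime.eq_one_or_self_of_dvd hp j hdvd)
      have : x / 2 < x := by omega
      omega
  simp only [key]
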